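/- A skew-symmetric matrix a = (a^{ij}) over ℂ (size 11×11) is of the form a^{ij} = e₁^i e₂^j − e₂^i e₁^j for some vectors e₁, e₂ spanning an isotropic 2-plane if and only if a satisfies: (1) Σ_{i,j} a^{ij}a^{ij} = 0, (2) the Plücker relations a^{[ij}a^{kl]} = 0 (antisymmetrization over all four indices), and (3) Σ_k a^{ki}a^{kj} = 0 for all i,j, together with a ≠ 0. (Formally: a nonzero skew matrix satisfying (1)–(3) has rank 2 and its column space is isotropic.) -/

import Mathlib

/-- The standard symmetric bilinear form on `ℂ¹¹`. -/
noncomputable def Bstd (x y : Fin 11 → ℂ) : ℂ := ∑ i, x i * y i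

lemma Bstd_expand (x y u v : Fin 11 → ℂ) (s t s' t' : ℂ) :
    Bstd (s • x + t • y) (s' • u + t' • v) =
      s * s' * Bstd x u + s * t' * Bstd x v + t * s' * Bstd y u + t * t' * Bstd y v := by
  simp only [Bstd, Finset.mul_sum, ← Finset.sum_add_distrib]
  apply Finset.sum_congr rfl
  intro i _
  simp only [Pi.add_apply, Pi.smul_apply, smul_eq_mul]
  ring

/-- A nonzero skew-symmetric `11×11` complex matrix is of the form
`a^{ij} = e₁^i e₂^j − e₂^i e₁^j` for `e₁, e₂` spanning an isotropic 2-plane iff it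
satisfies `Σ a^{ij}a^{ij} = 0`, the Plücker relations, `Σ_k a^{ki}a^{kj} = 0`, and `a ≠ 0`. -/
theorem stmt4 (a : Matrix (Fin 11) (Fin 11) ℂ) (hskew : a.transpose = -a) :
    (∃ e₁ e₂ : Fin 11 → ℂ,
        (∀ i j, a i j = e₁ i * e₂ j - e₂ i * e₁ j) ∧
        Module.finrank ℂ (Submodule.span ℂ {e₁, e₂}) = 2 ∧
        (∀ w ∈ Submodule.span ℂ {e₁, e₂}, ∀ w' ∈ Submodule.span ℂ {e₁, e₂},
          Bstd w w' = 0)) ↔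
      ((∑ i, ∑ j, a i j * a i j = 0) ∧
        (∀ i j k l, a i j * a k l - a i k * a j l + a i l * a j k = 0) ∧
        (∀ i j, ∑ k, a k i * a k j = 0) ∧
        a ≠ 0) := by
  have hsk : ∀ i j, a j i = - a i j := by
    intro i j
    have := congrFun (congrFun hskew i) j
    simpa [Matrix.transpose_apply] using this
  constructor
  · rintro ⟨e₁, e₂, ha, hrank, hiso⟩
    have he1 : e₁ ∈ Submodule.span ℂ ({e₁, e₂} : Set (Fin 11 → ℂ)) :=
      Submodule.subset_span (by simp)
    have he2 : e₂ ∈ Submodule.span ℂ ({e₁, e₂} : Set (Fin 11 → ℂ)) :=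
      Submodule.subset_span (by simp)
    have h11 : Bstd e₁ e₁ = 0 := hiso e₁ he1 e₁ he1
    have h12 : Bstd e₁ e₂ = 0 := hiso e₁ he1 e₂ he2
    have h22 : Bstd e₂ e₂ = 0 := hiso e₂ he2 e₂ he2
    have key : ∀ i j, ∑ k, a k i * a k j = 0 := by
      intro i j
      have step : ∀ k : Fin 11, a k i * a k j =
          e₂ i * e₂ j * (e₁ k * e₁ k) - (e₂ i * e₁ j + e₁ i * e₂ j) * (e₁ k * e₂ k)
            + e₁ i * e₁ j * (e₂ k * e₂ k) := by
        intro k; rw [ha, ha]; ring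
      calc ∑ k, a k i * a k j
          = ∑ k, (e₂ i * e₂ j * (e₁ k * e₁ k) - (e₂ i * e₁ j + e₁ i * e₂ j) * (e₁ k * e₂ k)
              + e₁ i * e₁ j * (e₂ k * e₂ k)) := Finset.sum_congr rfl (fun k _ => step k)
        _ = e₂ i * e₂ j * Bstd e₁ e₁ - (e₂ i * e₁ j + e₁ i * e₂ j) * Bstd e₁ e₂
              + e₁ i * e₁ j * Bstd e₂ e₂ := by
            simp only [Bstd, Finset.mul_sum, Finset.sum_add_distrib, Finset.sum_sub_distrib]
        _ = 0 := by rw [h11, h12, h22]; ring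
    refine ⟨?_, ?_, key, ?_⟩
    · calc ∑ i, ∑ j, a i j * a i j = ∑ j, ∑ i, a i j * a i j := Finset.sum_comm
        _ = ∑ j : Fin 11, (0 : ℂ) := Finset.sum_congr rfl (fun j _ => key j j)
        _ = 0 := by simp
    · intro i j k l
      rw [ha i j, ha k l, ha i k, ha j l, ha i l, ha j k]; ring
    · intro h0
      have hzero : ∀ i j, e₁ i * e₂ j = e₂ i * e₁ j := by
        intro i j
        have := ha i j
        rw [h0] at this
        simp at this
        linear_combination -this
      have hle : ∃ v : Fin 11 → ℂ, Submodule.span ℂ ({e₁, e₂} : Set (Fin 11 → ℂ)) ≤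
          Submodule.span ℂ ({v} : Set (Fin 11 → ℂ)) := by
        by_cases h2 : e₂ = 0
        · refine ⟨e₁, Submodule.span_le.2 ?_⟩
          intro x hx
          rcases hx with h | h
          · rw [h]; exact Submodule.subset_span rfl
          · rw [Set.mem_singleton_iff] at h; rw [h, h2]; exact Submodule.zero_mem _
        · obtain ⟨j0, hj0⟩ : ∃ j0, e₂ j0 ≠ 0 := by
            by_contra h; push_neg at h; exact h2 (funext h)
          have hmem : e₁ ∈ Submodule.span ℂ ({e₂} : Set (Fin 11 → ℂ)) := by
            have he : e₁ = (e₁ j0 / e₂ j0) • e₂ := by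
              funext i
              have hh := hzero i j0
              simp only [Pi.smul_apply, smul_eq_mul]
              field_simp
              linear_combination hh
            rw [he]
            exact Submodule.smul_mem _ _ (Submodule.subset_span rfl)
          refine ⟨e₂, Submodule.span_le.2 ?_⟩
          intro x hx
          rcases hx with h | h
          · rw [h]; exact hmem
          · rw [Set.mem_singleton_iff] at h; rw [h]; exact Submodule.subset_span rfl
      obtain ⟨v, hv⟩ := hle
      have hfr : Module.finrank ℂ (Submodule.span ℂ ({v} : Set (Fin 11 → ℂ))) ≤ 1 := by
        by_cases hv0 : v = 0
        · subst hv0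
          rw [show ({(0 : Fin 11 → ℂ)} : Set (Fin 11 → ℂ)) = ↑(⊥ : Submodule ℂ (Fin 11 → ℂ)) by
            simp, Submodule.span_eq]
          simp
        · rw [finrank_span_singleton hv0]
      have := Submodule.finrank_mono hv
      omega
  · rintro ⟨h1, h2, h3, hne⟩
    obtain ⟨p, q, hpq⟩ : ∃ p q, a p q ≠ 0 := by
      by_contra h; push_neg at h
      exact hne (by ext i j; simpa using h i j)
    have hdiag : ∀ i, a i i = 0 := by
      intro i
      have := hsk i i
      linear_combination (1/2 : ℂ) * this
    set c := a p q with hc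
    refine ⟨fun i => a i p, fun j => a j q / c, ?_, ?_, ?_⟩
    · intro i j
      have hP := h2 i j p q
      field_simp
      linear_combination hP
    · have hli : LinearIndependent ℂ ![(fun i => a i p : Fin 11 → ℂ), fun j => a j q / c] := by
        rw [LinearIndependent.pair_iff]
        intro s t hst
        have hq := congrFun hst q
        have hp := congrFun hst p
        simp only [Pi.add_apply, Pi.smul_apply, smul_eq_mul, Pi.zero_apply] at hq hp
        rw [hdiag q] at hq
        rw [hdiag p] at hp
        have hqp : a q p = -c := by rw [hc]; exact hsk p q
        rw [hqp] at hq
        simp at hq hp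
        refine ⟨hq.resolve_right hpq, hp.resolve_right ?_⟩
        rw [← hc]; simpa using hpq
      have := finrank_span_eq_card hli
      have hrange : Set.range ![(fun i => a i p : Fin 11 → ℂ), fun j => a j q / c] =
          {(fun i => a i p : Fin 11 → ℂ), fun j => a j q / c} := by
        ext x
        simp only [Set.mem_range, Fin.exists_fin_two, Matrix.cons_val_zero,
          Matrix.cons_val_one, Matrix.head_cons, Set.mem_insert_iff, Set.mem_singleton_iff]
        tauto
      rw [hrange] at this
      simpa using this
    · have B11 : Bstd (fun i => a i p) (fun i => a i p) = 0 := by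
        simpa [Bstd] using h3 p p
      have B12 : Bstd (fun i => a i p) (fun j => a j q / c) = 0 := by
        have := h3 p q
        simp only [Bstd]
        rw [show (∑ i, a i p * (a i q / c)) = (∑ i, a i p * a i q) / c by
          rw [Finset.sum_div]; exact Finset.sum_congr rfl (fun i _ => by ring)]
        rw [this]; simp
      have B21 : Bstd (fun j => a j q / c) (fun i => a i p) = 0 := by
        have := h3 q p
        simp only [Bstd]
        rw [show (∑ i, (a i q / c) * a i p) = (∑ i, a i q * a i p) / c by
          rw [Finset.sum_div]; exact Finset.sum_congr rfl (fun i _ => by ring)]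
        rw [this]; simp
      have B22 : Bstd (fun j => a j q / c) (fun j => a j q / c) = 0 := by
        have := h3 q q
        simp only [Bstd]
        rw [show (∑ i, (a i q / c) * (a i q / c)) = (∑ i, a i q * a i q) / (c * c) by
          rw [Finset.sum_div]; exact Finset.sum_congr rfl (fun i _ => by ring)]
        rw [this]; simp
      intro w hw w' hw'
      rw [Submodule.mem_span_pair] at hw hw'
      obtain ⟨s, t, rfl⟩ := hw
      obtain ⟨s', t', rfl⟩ := hw'
      rw [Bstd_expand, B11, B12, B21, B22]
      ring
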